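/- Under the hypotheses of the orthogonality relation — U_s : [0,∞) → ℝ C^∞ with U_s, U_s', U_s'' bounded; α > 0, ν > 0; c₁ ≠ c₂ in ℂ; ψ₁, ψ₂ : [0,∞) → ℂ C^4 with ψᵢ(0) = ψᵢ'(0) = 0 and |ψᵢ^{(k)}(z)| ≤ K e^{−δz} for 0 ≤ k ≤ 4; Orr_{c₁,α,ν}(ψ₁) = 0 and Orr^t_{c₂,α,ν}(ψ₂) = 0 — the associated velocity profiles are orthogonal: ∫₀^∞ ( ψ₁'(z)ψ₂'(z) + α² ψ₁(z)ψ₂(z) ) dz = 0. -/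

import Mathlib

open Complex MeasureTheory Filter

noncomputable section

/-- The Orr–Sommerfeld operator. -/
def Orr (Us : ℝ → ℝ) (c : ℂ) (α ν : ℝ) (ψ : ℝ → ℂ) (z : ℝ) : ℂ :=
  ((Us z : ℂ) - c) * (iteratedDeriv 2 ψ z - (α : ℂ) ^ 2 * ψ z)
    - ((deriv (deriv Us) z : ℝ) : ℂ) * ψ z
    - (ν : ℂ) / (Complex.I * (α : ℂ)) *
        (iteratedDeriv 4 ψ z - 2 * (α : ℂ) ^ 2 * iteratedDeriv 2 ψ z + (α : ℂ) ^ 4 * ψ z)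

/-- The adjoint Orr–Sommerfeld operator
`Orr^t(ψ) = ((U_s − c)ψ)'' − α²(U_s − c)ψ − U_s''ψ − (ν/(iα))(ψ'''' − 2α²ψ'' + α⁴ψ)`. -/
def OrrT (Us : ℝ → ℝ) (c : ℂ) (α ν : ℝ) (ψ : ℝ → ℂ) (z : ℝ) : ℂ :=
  iteratedDeriv 2 (fun t => ((Us t : ℂ) - c) * ψ t) z
    - (α : ℂ) ^ 2 * ((Us z : ℂ) - c) * ψ z
    - ((deriv (deriv Us) z : ℝ) : ℂ) * ψ z
    - (ν : ℂ) / (Complex.I * (α : ℂ)) *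
        (iteratedDeriv 4 ψ z - 2 * (α : ℂ) ^ 2 * iteratedDeriv 2 ψ z + (α : ℂ) ^ 4 * ψ z)

/-- auxiliary: the bilinear concomitant used in the orthogonality proof. -/
def Faux (Us : ℝ → ℝ) (c₁ c₂ : ℂ) (α ν : ℝ) (ψ₁ ψ₂ : ℝ → ℂ) (z : ℝ) : ℂ :=
  (c₂ - c₁) * (ψ₁ z * deriv ψ₂ z)
    + deriv ψ₁ z * (((Us z : ℂ) - c₁) * ψ₂ z)
    - ψ₁ z * (((deriv Us z : ℝ) : ℂ) * ψ₂ z + ((Us z : ℂ) - c₁) * deriv ψ₂ z)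
    - (ν : ℂ) / (Complex.I * (α : ℂ)) *
        (iteratedDeriv 3 ψ₁ z * ψ₂ z - iteratedDeriv 2 ψ₁ z * deriv ψ₂ z
          + deriv ψ₁ z * iteratedDeriv 2 ψ₂ z - ψ₁ z * iteratedDeriv 3 ψ₂ z
          - 2 * (α : ℂ) ^ 2 * (deriv ψ₁ z * ψ₂ z - ψ₁ z * deriv ψ₂ z))

lemma hasDerivAt_congr_deriv {f : ℝ → ℂ} {a b : ℂ} {x : ℝ}
    (h : HasDerivAt f a x) (e : a = b) : HasDerivAt f b x := e ▸ h

/-- eigenfunctions of `Orr` and of `Orr^t` with distinct wave speeds have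
orthogonal velocity profiles: `∫₀^∞ (ψ₁'ψ₂' + α²ψ₁ψ₂) = 0`. -/
theorem orr_adjoint_velocity_orthogonality
    (Us : ℝ → ℝ) (hUs : ContDiff ℝ (⊤ : ℕ∞) Us)
    (MU : ℝ) (hUb : ∀ z : ℝ, 0 ≤ z →
      |Us z| ≤ MU ∧ |deriv Us z| ≤ MU ∧ |deriv (deriv Us) z| ≤ MU)
    (α ν : ℝ) (hα : 0 < α) (hν : 0 < ν) (c₁ c₂ : ℂ) (hc : c₁ ≠ c₂)
    (ψ₁ ψ₂ : ℝ → ℂ) (hψ₁ : ContDiff ℝ 4 ψ₁) (hψ₂ : ContDiff ℝ 4 ψ₂)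
    (hψ₁0 : ψ₁ 0 = 0) (hψ₁'0 : deriv ψ₁ 0 = 0)
    (hψ₂0 : ψ₂ 0 = 0) (hψ₂'0 : deriv ψ₂ 0 = 0)
    (K δ : ℝ) (hK : 0 < K) (hδ : 0 < δ)
    (hdec₁ : ∀ k ≤ 4, ∀ z : ℝ, 0 ≤ z →
      ‖iteratedDeriv k ψ₁ z‖ ≤ K * Real.exp (-δ * z))
    (hdec₂ : ∀ k ≤ 4, ∀ z : ℝ, 0 ≤ z →
      ‖iteratedDeriv k ψ₂ z‖ ≤ K * Real.exp (-δ * z))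
    (heig₁ : ∀ z : ℝ, 0 ≤ z → Orr Us c₁ α ν ψ₁ z = 0)
    (heig₂ : ∀ z : ℝ, 0 ≤ z → OrrT Us c₂ α ν ψ₂ z = 0) :
    ∫ z in Set.Ici (0 : ℝ),
        (deriv ψ₁ z * deriv ψ₂ z + (α : ℂ) ^ 2 * ψ₁ z * ψ₂ z) = 0 := by
  -- basic differentiability facts
  have hgen : ∀ (ψ : ℝ → ℂ), ContDiff ℝ 4 ψ → ∀ k : ℕ, k < 4 → ∀ z : ℝ,
      HasDerivAt (iteratedDeriv k ψ) (iteratedDeriv (k+1) ψ z) z := by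
    intro ψ hψ k hk z
    rw [iteratedDeriv_succ]
    exact ((hψ.differentiable_iteratedDeriv k (by exact_mod_cast hk)) z).hasDerivAt
  have P0 : ∀ z : ℝ, HasDerivAt ψ₁ (deriv ψ₁ z) z :=
    fun z => (hψ₁.differentiable (by norm_num) z).hasDerivAt
  have Q0 : ∀ z : ℝ, HasDerivAt ψ₂ (deriv ψ₂ z) z :=
    fun z => (hψ₂.differentiable (by norm_num) z).hasDerivAt
  have P1 : ∀ z : ℝ, HasDerivAt (deriv ψ₁) (iteratedDeriv 2 ψ₁ z) z := by
    intro z; have := hgen ψ₁ hψ₁ 1 (by norm_num) z; rwa [iteratedDeriv_one] at this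
  have Q1 : ∀ z : ℝ, HasDerivAt (deriv ψ₂) (iteratedDeriv 2 ψ₂ z) z := by
    intro z; have := hgen ψ₂ hψ₂ 1 (by norm_num) z; rwa [iteratedDeriv_one] at this
  have P2 : ∀ z : ℝ, HasDerivAt (iteratedDeriv 2 ψ₁) (iteratedDeriv 3 ψ₁ z) z :=
    fun z => hgen ψ₁ hψ₁ 2 (by norm_num) z
  have Q2 : ∀ z : ℝ, HasDerivAt (iteratedDeriv 2 ψ₂) (iteratedDeriv 3 ψ₂ z) z :=
    fun z => hgen ψ₂ hψ₂ 2 (by norm_num) z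
  have P3 : ∀ z : ℝ, HasDerivAt (iteratedDeriv 3 ψ₁) (iteratedDeriv 4 ψ₁ z) z :=
    fun z => hgen ψ₁ hψ₁ 3 (by norm_num) z
  have Q3 : ∀ z : ℝ, HasDerivAt (iteratedDeriv 3 ψ₂) (iteratedDeriv 4 ψ₂ z) z :=
    fun z => hgen ψ₂ hψ₂ 3 (by norm_num) z
  have hUs' : ContDiff ℝ (⊤ : ℕ∞) (deriv Us) := (contDiff_infty_iff_deriv.mp hUs).2
  have hU : ∀ z : ℝ, HasDerivAt (fun t : ℝ => ((Us t : ℝ) : ℂ)) ((deriv Us z : ℝ) : ℂ) z :=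
    fun z => ((hUs.differentiable (by norm_num) z).hasDerivAt).ofReal_comp
  have hU1 : ∀ z : ℝ, HasDerivAt (fun t : ℝ => ((deriv Us t : ℝ) : ℂ))
      ((deriv (deriv Us) z : ℝ) : ℂ) z :=
    fun z => ((hUs'.differentiable (by norm_num) z).hasDerivAt).ofReal_comp
  -- expansion of the second derivative appearing in OrrT
  have hexp : ∀ z : ℝ, iteratedDeriv 2 (fun t => ((Us t : ℂ) - c₂) * ψ₂ t) z
      = (((deriv (deriv Us) z : ℝ) : ℂ) * ψ₂ z + ((deriv Us z : ℝ) : ℂ) * deriv ψ₂ z)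
        + (((deriv Us z : ℝ) : ℂ) * deriv ψ₂ z + ((Us z : ℂ) - c₂) * iteratedDeriv 2 ψ₂ z) := by
    intro z
    have hder1 : deriv (fun t => ((Us t : ℂ) - c₂) * ψ₂ t)
        = fun t => ((deriv Us t : ℝ) : ℂ) * ψ₂ t + ((Us t : ℂ) - c₂) * deriv ψ₂ t :=
      funext fun t => (((hU t).sub_const c₂).mul (Q0 t)).deriv
    rw [show (2 : ℕ) = 1 + 1 from rfl, iteratedDeriv_succ, iteratedDeriv_one, hder1]
    exact (((hU1 z).mul (Q0 z)).add (((hU z).sub_const c₂).mul (Q1 z))).deriv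
  -- the key derivative identity
  have Hder : ∀ z : ℝ, 0 ≤ z → HasDerivAt (Faux Us c₁ c₂ α ν ψ₁ ψ₂)
      ((c₂ - c₁) * (deriv ψ₁ z * deriv ψ₂ z + (α : ℂ) ^ 2 * ψ₁ z * ψ₂ z)) z := by
    intro z hz
    have E1 := heig₁ z hz
    have E2 := heig₂ z hz
    simp only [Orr] at E1
    simp only [OrrT] at E2
    rw [hexp z] at E2
    have X := (((P0 z).mul (Q1 z)).const_mul (c₂ - c₁)).add
      ((P1 z).mul (((hU z).sub_const c₁).mul (Q0 z)))
    have Z := (P0 z).mul (((hU1 z).mul (Q0 z)).add (((hU z).sub_const c₁).mul (Q1 z)))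
    have W := ((((P3 z).mul (Q0 z)).sub ((P2 z).mul (Q1 z))).add
      ((P1 z).mul (Q2 z))).sub ((P0 z).mul (Q3 z))
    have V := (((P1 z).mul (Q0 z)).sub ((P0 z).mul (Q1 z))).const_mul (2 * (α : ℂ) ^ 2)
    have Hbig := (X.sub Z).sub ((W.sub V).const_mul ((ν : ℂ) / (Complex.I * (α : ℂ))))
    exact hasDerivAt_congr_deriv Hbig (by simp only [Pi.mul_apply, Pi.add_apply, Pi.sub_apply]; linear_combination (ψ₂ z) * E1 - (ψ₁ z) * E2)
  -- decay and limits
  have hKexp : Tendsto (fun z : ℝ => K * Real.exp (-δ * z)) atTop (nhds 0) := by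
    have h1 : Tendsto (fun z : ℝ => δ * z) atTop atTop :=
      Tendsto.const_mul_atTop hδ tendsto_id
    have h2 := Real.tendsto_exp_neg_atTop_nhds_zero.comp h1
    have h3 : Tendsto (fun z : ℝ => Real.exp (-δ * z)) atTop (nhds 0) := by
      have he : (fun z : ℝ => Real.exp (-δ * z))
          = (fun x : ℝ => Real.exp (-x)) ∘ (fun z : ℝ => δ * z) := by
        funext z; simp [neg_mul]
      rw [he]; exact h2
    simpa using h3.const_mul K
  have tz : ∀ (ψ : ℝ → ℂ), (∀ k ≤ 4, ∀ z : ℝ, 0 ≤ z →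
      ‖iteratedDeriv k ψ z‖ ≤ K * Real.exp (-δ * z)) →
      ∀ k : ℕ, k ≤ 4 → Tendsto (iteratedDeriv k ψ) atTop (nhds 0) := by
    intro ψ hdec k hk
    apply squeeze_zero_norm' _ hKexp
    filter_upwards [eventually_ge_atTop (0:ℝ)] with z hz
    exact hdec k hk z hz
  have tp0 : Tendsto ψ₁ atTop (nhds 0) := by
    have := tz ψ₁ hdec₁ 0 (by norm_num); rwa [iteratedDeriv_zero] at this
  have tq0 : Tendsto ψ₂ atTop (nhds 0) := by
    have := tz ψ₂ hdec₂ 0 (by norm_num); rwa [iteratedDeriv_zero] at this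
  have tp1 : Tendsto (deriv ψ₁) atTop (nhds 0) := by
    have := tz ψ₁ hdec₁ 1 (by norm_num); rwa [iteratedDeriv_one] at this
  have tq1 : Tendsto (deriv ψ₂) atTop (nhds 0) := by
    have := tz ψ₂ hdec₂ 1 (by norm_num); rwa [iteratedDeriv_one] at this
  have tp2 : Tendsto (iteratedDeriv 2 ψ₁) atTop (nhds 0) := tz ψ₁ hdec₁ 2 (by norm_num)
  have tq2 : Tendsto (iteratedDeriv 2 ψ₂) atTop (nhds 0) := tz ψ₂ hdec₂ 2 (by norm_num)
  have tp3 : Tendsto (iteratedDeriv 3 ψ₁) atTop (nhds 0) := tz ψ₁ hdec₁ 3 (by norm_num)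
  have tq3 : Tendsto (iteratedDeriv 3 ψ₂) atTop (nhds 0) := tz ψ₂ hdec₂ 3 (by norm_num)
  -- pointwise bounds (for boundedness)
  have hexp1 : ∀ z : ℝ, 0 ≤ z → Real.exp (-δ * z) ≤ 1 := by
    intro z hz
    rw [Real.exp_le_one_iff]
    nlinarith
  have hq0K : ∀ z : ℝ, 0 ≤ z → ‖ψ₂ z‖ ≤ K := by
    intro z hz
    have := hdec₂ 0 (by norm_num) z hz
    rw [iteratedDeriv_zero] at this
    calc ‖ψ₂ z‖ ≤ K * Real.exp (-δ * z) := this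
      _ ≤ K * 1 := by have := hexp1 z hz; nlinarith
      _ = K := mul_one K
  have hq1K : ∀ z : ℝ, 0 ≤ z → ‖deriv ψ₂ z‖ ≤ K := by
    intro z hz
    have := hdec₂ 1 (by norm_num) z hz
    rw [iteratedDeriv_one] at this
    calc ‖deriv ψ₂ z‖ ≤ K * Real.exp (-δ * z) := this
      _ ≤ K * 1 := by have := hexp1 z hz; nlinarith
      _ = K := mul_one K
  have hp1K : ∀ z : ℝ, 0 ≤ z → ‖deriv ψ₁ z‖ ≤ K := by
    intro z hz
    have := hdec₁ 1 (by norm_num) z hz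
    rw [iteratedDeriv_one] at this
    calc ‖deriv ψ₁ z‖ ≤ K * Real.exp (-δ * z) := this
      _ ≤ K * 1 := by have := hexp1 z hz; nlinarith
      _ = K := mul_one K
  have hUbd : ∀ z : ℝ, 0 ≤ z → ‖((Us z : ℝ) : ℂ) - c₁‖ ≤ MU + ‖c₁‖ := by
    intro z hz
    calc ‖((Us z : ℝ) : ℂ) - c₁‖ ≤ ‖((Us z : ℝ) : ℂ)‖ + ‖c₁‖ := norm_sub_le _ _
      _ ≤ MU + ‖c₁‖ := by
          have h1 : ‖((Us z : ℝ) : ℂ)‖ = |Us z| := by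
            simp [Complex.norm_real]
          rw [h1]; linarith [(hUb z hz).1]
  have hU1bd : ∀ z : ℝ, 0 ≤ z → ‖(((deriv Us z : ℝ)) : ℂ)‖ ≤ MU := by
    intro z hz
    have h1 : ‖(((deriv Us z : ℝ)) : ℂ)‖ = |deriv Us z| := by simp [Complex.norm_real]
    rw [h1]; exact (hUb z hz).2.1
  -- F tends to 0 at infinity
  have htendF : Tendsto (Faux Us c₁ c₂ α ν ψ₁ ψ₂) atTop (nhds 0) := by
    have T1 : Tendsto (fun z => (c₂ - c₁) * (ψ₁ z * deriv ψ₂ z)) atTop (nhds 0) := by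
      simpa using (tp0.mul tq1).const_mul (c₂ - c₁)
    have T2 : Tendsto (fun z => deriv ψ₁ z * (((Us z : ℂ) - c₁) * ψ₂ z)) atTop (nhds 0) := by
      apply tp1.zero_mul_isBoundedUnder_le
      refine isBoundedUnder_of_eventually_le (a := (MU + ‖c₁‖) * K) ?_
      filter_upwards [eventually_ge_atTop (0:ℝ)] with z hz
      calc ‖((Us z : ℂ) - c₁) * ψ₂ z‖ = ‖((Us z : ℂ) - c₁)‖ * ‖ψ₂ z‖ := norm_mul _ _
        _ ≤ (MU + ‖c₁‖) * K := by
            have := hUbd z hz; have := hq0K z hz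
            have h0 : (0:ℝ) ≤ ‖((Us z : ℂ) - c₁)‖ := norm_nonneg _
            nlinarith [norm_nonneg (ψ₂ z)]
    have T3 : Tendsto (fun z => ψ₁ z * (((deriv Us z : ℝ) : ℂ) * ψ₂ z
        + ((Us z : ℂ) - c₁) * deriv ψ₂ z)) atTop (nhds 0) := by
      apply tp0.zero_mul_isBoundedUnder_le
      refine isBoundedUnder_of_eventually_le (a := MU * K + (MU + ‖c₁‖) * K) ?_
      filter_upwards [eventually_ge_atTop (0:ℝ)] with z hz
      calc ‖((deriv Us z : ℝ) : ℂ) * ψ₂ z + ((Us z : ℂ) - c₁) * deriv ψ₂ z‖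
          ≤ ‖((deriv Us z : ℝ) : ℂ) * ψ₂ z‖ + ‖((Us z : ℂ) - c₁) * deriv ψ₂ z‖ :=
            norm_add_le _ _
        _ ≤ MU * K + (MU + ‖c₁‖) * K := by
            rw [norm_mul, norm_mul]
            have h1 := hU1bd z hz; have h2 := hq0K z hz
            have h3 := hUbd z hz; have h4 := hq1K z hz
            have h5 : (0:ℝ) ≤ ‖((deriv Us z : ℝ) : ℂ)‖ := norm_nonneg _
            have h6 : (0:ℝ) ≤ ‖((Us z : ℂ) - c₁)‖ := norm_nonneg _
            nlinarith [norm_nonneg (ψ₂ z), norm_nonneg (deriv ψ₂ z)]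
    have T4 : Tendsto (fun z => (ν : ℂ) / (Complex.I * (α : ℂ)) *
        (iteratedDeriv 3 ψ₁ z * ψ₂ z - iteratedDeriv 2 ψ₁ z * deriv ψ₂ z
          + deriv ψ₁ z * iteratedDeriv 2 ψ₂ z - ψ₁ z * iteratedDeriv 3 ψ₂ z
          - 2 * (α : ℂ) ^ 2 * (deriv ψ₁ z * ψ₂ z - ψ₁ z * deriv ψ₂ z))) atTop (nhds 0) := by
      have inner : Tendsto (fun z => iteratedDeriv 3 ψ₁ z * ψ₂ z
          - iteratedDeriv 2 ψ₁ z * deriv ψ₂ z + deriv ψ₁ z * iteratedDeriv 2 ψ₂ z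
          - ψ₁ z * iteratedDeriv 3 ψ₂ z
          - 2 * (α : ℂ) ^ 2 * (deriv ψ₁ z * ψ₂ z - ψ₁ z * deriv ψ₂ z)) atTop (nhds 0) := by
        have := ((((tp3.mul tq0).sub (tp2.mul tq1)).add (tp1.mul tq2)).sub
          (tp0.mul tq3)).sub (((tp1.mul tq0).sub (tp0.mul tq1)).const_mul (2 * (α : ℂ) ^ 2))
        simpa using this
      simpa using inner.const_mul ((ν : ℂ) / (Complex.I * (α : ℂ)))
    have := ((T1.add T2).sub T3).sub T4
    simp only [add_zero, sub_zero] at this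
    exact this
  -- F is continuous
  have hFcont : Continuous (Faux Us c₁ c₂ α ν ψ₁ ψ₂) := by
    have c0 : Continuous ψ₁ := hψ₁.continuous
    have c1 : Continuous ψ₂ := hψ₂.continuous
    have c2 : Continuous (deriv ψ₁) := hψ₁.continuous_deriv (by norm_num)
    have c3 : Continuous (deriv ψ₂) := hψ₂.continuous_deriv (by norm_num)
    have c4 : Continuous (iteratedDeriv 2 ψ₁) := hψ₁.continuous_iteratedDeriv 2 (by norm_num)
    have c5 : Continuous (iteratedDeriv 2 ψ₂) := hψ₂.continuous_iteratedDeriv 2 (by norm_num)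
    have c6 : Continuous (iteratedDeriv 3 ψ₁) := hψ₁.continuous_iteratedDeriv 3 (by norm_num)
    have c7 : Continuous (iteratedDeriv 3 ψ₂) := hψ₂.continuous_iteratedDeriv 3 (by norm_num)
    have c8 : Continuous (fun z : ℝ => ((Us z : ℝ) : ℂ)) :=
      Complex.continuous_ofReal.comp hUs.continuous
    have c9 : Continuous (fun z : ℝ => ((deriv Us z : ℝ) : ℂ)) :=
      Complex.continuous_ofReal.comp hUs'.continuous
    unfold Faux
    fun_prop
  have hF0 : Faux Us c₁ c₂ α ν ψ₁ ψ₂ 0 = 0 := by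
    simp [Faux, hψ₁0, hψ₁'0, hψ₂0, hψ₂'0]
  -- integrability of the derivative
  have hint : IntegrableOn (fun z : ℝ =>
      (c₂ - c₁) * (deriv ψ₁ z * deriv ψ₂ z + (α : ℂ) ^ 2 * ψ₁ z * ψ₂ z)) (Set.Ioi 0) := by
    have hbint : IntegrableOn (fun z : ℝ =>
        (‖c₂ - c₁‖ * (K * K + α ^ 2 * (K * K))) * Real.exp (-δ * z)) (Set.Ioi 0) := by
      have := (exp_neg_integrableOn_Ioi 0 hδ).const_mul (‖c₂ - c₁‖ * (K * K + α ^ 2 * (K * K)))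
      simpa [neg_mul, IntegrableOn] using this
    apply Integrable.mono' hbint
    · apply Continuous.aestronglyMeasurable
      have c0 : Continuous ψ₁ := hψ₁.continuous
      have c1 : Continuous ψ₂ := hψ₂.continuous
      have c2 : Continuous (deriv ψ₁) := hψ₁.continuous_deriv (by norm_num)
      have c3 : Continuous (deriv ψ₂) := hψ₂.continuous_deriv (by norm_num)
      fun_prop
    · filter_upwards [ae_restrict_mem measurableSet_Ioi] with z hz
      have hz' : (0:ℝ) ≤ z := le_of_lt hz
      have b1 := hp1K z hz'
      have b2 := hdec₂ 1 (by norm_num) z hz'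
      rw [iteratedDeriv_one] at b2
      have b3 : ‖ψ₁ z‖ ≤ K := by
        have := hdec₁ 0 (by norm_num) z hz'
        rw [iteratedDeriv_zero] at this
        have he := hexp1 z hz'
        calc ‖ψ₁ z‖ ≤ K * Real.exp (-δ * z) := this
          _ ≤ K := by nlinarith
      have b4 := hdec₂ 0 (by norm_num) z hz'
      rw [iteratedDeriv_zero] at b4
      have he : (0:ℝ) < Real.exp (-δ * z) := Real.exp_pos _
      calc ‖(c₂ - c₁) * (deriv ψ₁ z * deriv ψ₂ z + (α : ℂ) ^ 2 * ψ₁ z * ψ₂ z)‖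
          = ‖c₂ - c₁‖ * ‖deriv ψ₁ z * deriv ψ₂ z + (α : ℂ) ^ 2 * ψ₁ z * ψ₂ z‖ := norm_mul _ _
        _ ≤ ‖c₂ - c₁‖ * (‖deriv ψ₁ z‖ * ‖deriv ψ₂ z‖ + α ^ 2 * (‖ψ₁ z‖ * ‖ψ₂ z‖)) := by
            gcongr
            refine (norm_add_le _ _).trans ?_
            rw [norm_mul, norm_mul, norm_mul]
            have : ‖((α:ℝ) : ℂ) ^ 2‖ = α ^ 2 := by
              rw [norm_pow]; simp [Complex.norm_real, abs_of_pos hα]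
            rw [this]
            exact le_of_eq (by ring)
        _ ≤ ‖c₂ - c₁‖ * (K * (K * Real.exp (-δ * z)) + α ^ 2 * (K * (K * Real.exp (-δ * z)))) := by
            have b1' : ‖deriv ψ₁ z‖ ≤ K := b1
            have b2' : ‖deriv ψ₂ z‖ ≤ K * Real.exp (-δ * z) := b2
            have b4' : ‖ψ₂ z‖ ≤ K * Real.exp (-δ * z) := b4
            gcongr <;> first | exact b1' | exact b2' | exact b3 | exact b4'
        _ = (‖c₂ - c₁‖ * (K * K + α ^ 2 * (K * K))) * Real.exp (-δ * z) := by ring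
  -- FTC
  have hcont0 : ContinuousWithinAt (Faux Us c₁ c₂ α ν ψ₁ ψ₂) (Set.Ici 0) 0 :=
    hFcont.continuousWithinAt
  have FTC := integral_Ioi_of_hasDerivAt_of_tendsto hcont0
    (fun x hx => Hder x (le_of_lt hx)) hint htendF
  rw [hF0, sub_zero] at FTC
  have hmul : (c₂ - c₁) * ∫ z in Set.Ioi (0:ℝ),
      (deriv ψ₁ z * deriv ψ₂ z + (α : ℂ) ^ 2 * ψ₁ z * ψ₂ z) = 0 := by
    rw [← MeasureTheory.integral_const_mul]
    exact FTC
  rw [integral_Ici_eq_integral_Ioi]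
  have hne : c₂ - c₁ ≠ 0 := sub_ne_zero.mpr (Ne.symm hc)
  exact (mul_eq_zero.mp hmul).resolve_left hne


end
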